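/- Let (S_n)_{n∈ℕ} be a sequence of nontrivial finite perfect groups, and suppose there exists a finite set F of groups such that every S_n is isomorphic to a member of F. Then c(∏_{n∈ℕ} S_n) > ω; that is, the full direct product ∏_n S_n cannot be written as the union of a countable increasing chain of proper subgroups. -/

import Mathlib

/- Proof of the Koppelberg–Tits / Saxl–Shelah–Thomas theorem: a full direct product of
nontrivial finite perfect groups with finitely many isomorphism classes has
uncountable cofinality.

Strategy:
* Reduce to a Boolean-algebra statement: the sets `A` whose "indicator" elements
  (value `v` on `A` within an isomorphism class, `1` elsewhere) all lie in `H t` form an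
  increasing chain of Boolean subalgebras of `P(ℕ)` covering `P(ℕ)` (intersections are
  handled via the commutator identity and perfectness; every `g` is a finite product of
  indicators).
* Prove that `P(ℕ)` is not the union of a countable increasing chain of proper
  subalgebras: every proper subalgebra fails to separate some pair of distinct
  ultrafilters, and a single set can separate infinitely many of countably many pairs of
  distinct ultrafilters (via extraction of disjoint representatives and a diagonalization
  against the induced "predictor" ultrafilters).
-/

open Classical
open scoped commutatorElement

/-- Distinct ultrafilters admit a separating set. -/
lemma uf_sep {p q : Ultrafilter ℕ} (h : p ≠ q) : ∃ S : Set ℕ, S ∈ p ∧ S ∉ q := by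
  by_contra hc
  push_neg at hc
  have hle : (q : Filter ℕ) ≤ (p : Filter ℕ) := fun S hS => hc S hS
  exact h (Ultrafilter.eq_of_le hle).symm

/-- Two disjoint sets cannot both belong to an ultrafilter. -/
lemma uf_not_both {p : Ultrafilter ℕ} {A B : Set ℕ} (hAB : Disjoint A B)
    (hA : A ∈ p) (hB : B ∈ p) : False := by
  have : A ∩ B ∈ p := Filter.inter_mem hA hB
  rw [Set.disjoint_iff_inter_eq_empty.mp hAB] at this
  exact Filter.empty_notMem (p : Filter ℕ) this

/-- Fiber dichotomy: a function on an infinite set either has an infinite fiber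
or is injective on an infinite subset. -/
lemma fiber_dich {X : Type*} (f : ℕ → X) (N : Set ℕ) (hN : N.Infinite) :
    (∃ x, {n | n ∈ N ∧ f n = x}.Infinite) ∨
      ∃ M : Set ℕ, M ⊆ N ∧ M.Infinite ∧ Set.InjOn f M := by
  by_cases hfib : ∃ x, {n | n ∈ N ∧ f n = x}.Infinite
  · exact Or.inl hfib
  push_neg at hfib
  right
  refine ⟨{n | n ∈ N ∧ ∀ m ∈ N, m < n → f m ≠ f n}, fun n hn => hn.1, ?_, ?_⟩
  · -- M infinite
    by_contra hMfin
    rw [Set.not_infinite] at hMfin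
    -- every n ∈ N has a representative in M with same f-value
    have hrep : ∀ n ∈ N, ∃ m, (m ∈ N ∧ ∀ k ∈ N, k < m → f k ≠ f m) ∧ f m = f n := by
      intro n hn
      induction n using Nat.strong_induction_on with
      | _ n ih =>
        by_cases hmin : ∀ m ∈ N, m < n → f m ≠ f n
        · exact ⟨n, ⟨hn, hmin⟩, rfl⟩
        · push_neg at hmin
          obtain ⟨m, hmN, hmlt, hfm⟩ := hmin
          obtain ⟨m', hm', hfm'⟩ := ih m hmlt hmN
          exact ⟨m', hm', hfm'.trans hfm⟩
    have hsub : N ⊆ ⋃ m ∈ {n | n ∈ N ∧ ∀ k ∈ N, k < n → f k ≠ f n},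
        {n | n ∈ N ∧ f n = f m} := by
      intro n hn
      obtain ⟨m, hm, hfm⟩ := hrep n hn
      exact Set.mem_biUnion hm ⟨hn, hfm.symm⟩
    have : N.Finite := Set.Finite.subset (Set.Finite.biUnion hMfin
      (fun m _ => hfib (f m))) hsub
    exact hN this
  · -- InjOn
    intro a ha b hb hab
    by_contra hne
    rcases Nat.lt_or_ge a b with h | h
    · exact hb.2 a ha.1 h hab
    · rcases Nat.lt_or_ge b a with h' | h'
      · exact ha.2 b hb.1 h' hab.symm
      · exact hne (Nat.le_antisymm (Nat.le_of_lt_succ (Nat.lt_succ_of_le h'))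
          (Nat.le_of_lt_succ (Nat.lt_succ_of_le h)) ▸ rfl)

/-- An infinite subset of ℕ contains two distinct infinite subsets that are disjoint. -/
lemma split_inf (K : Set ℕ) (h : K.Infinite) :
    ∃ K₁ K₂ : Set ℕ, K₁ ⊆ K ∧ K₂ ⊆ K ∧ Disjoint K₁ K₂ ∧ K₁.Infinite ∧ K₂.Infinite := by
  set e := h.natEmbedding
  refine ⟨Set.range (fun n => (e (2 * n) : ℕ)), Set.range (fun n => (e (2 * n + 1) : ℕ)),
    ?_, ?_, ?_, ?_, ?_⟩
  · rintro x ⟨n, rfl⟩; exact (e (2 * n)).2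
  · rintro x ⟨n, rfl⟩; exact (e (2 * n + 1)).2
  · rw [Set.disjoint_left]
    rintro x ⟨n, rfl⟩ ⟨m, hm⟩
    have := e.injective (Subtype.ext hm)
    omega
  · apply Set.infinite_range_of_injective
    intro a b hab
    have := e.injective (Subtype.ext hab)
    omega
  · apply Set.infinite_range_of_injective
    intro a b hab
    have := e.injective (Subtype.ext hab)
    omega

lemma exists_unseparated (𝒜 : Set (Set ℕ))
    (huniv : Set.univ ∈ 𝒜)
    (hcompl : ∀ A ∈ 𝒜, Aᶜ ∈ 𝒜)
    (hinter : ∀ A ∈ 𝒜, ∀ B ∈ 𝒜, A ∩ B ∈ 𝒜)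
    {u : Set ℕ} (hu : u ∉ 𝒜) :
    ∃ p q : Ultrafilter ℕ, p ≠ q ∧ ∀ A ∈ 𝒜, (A ∈ p ↔ A ∈ q) := by
  -- finite unions of members of 𝒜 are members
  have sUnion_mem : ∀ T : Set (Set ℕ), T.Finite → (∀ s ∈ T, s ∈ 𝒜) → ⋃₀ T ∈ 𝒜 := by
    intro T hTfin
    refine Set.Finite.induction_on T hTfin ?_ ?_
    · intro _
      rw [Set.sUnion_empty]
      have := hcompl _ huniv
      rwa [Set.compl_univ] at this
    · intro s T _ _ ih hmem
      rw [Set.sUnion_insert]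
      have hs : s ∈ 𝒜 := hmem s (Set.mem_insert _ _)
      have hT : ⋃₀ T ∈ 𝒜 := ih fun t ht => hmem t (Set.mem_insert_of_mem _ ht)
      have : (sᶜ ∩ (⋃₀ T)ᶜ)ᶜ ∈ 𝒜 := hcompl _ (hinter _ (hcompl _ hs) _ (hcompl _ hT))
      rwa [Set.compl_inter, compl_compl, compl_compl] at this
  have sInter_mem : ∀ T : Set (Set ℕ), T.Finite → (∀ s ∈ T, s ∈ 𝒜) → ⋂₀ T ∈ 𝒜 := by
    intro T hTfin
    refine Set.Finite.induction_on T hTfin ?_ ?_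
    · intro _; rw [Set.sInter_empty]; exact huniv
    · intro s T _ _ ih hmem
      rw [Set.sInter_insert]
      exact hinter _ (hmem s (Set.mem_insert _ _)) _
        (ih fun t ht => hmem t (Set.mem_insert_of_mem _ ht))
  set D : Set (Set ℕ) := {a | a ∈ 𝒜 ∧ (a ⊆ u ∨ a ∩ u = ∅)} with hD
  set F₀ : Filter ℕ := Filter.generate (compl '' D) with hF₀
  by_cases hbot : (∅ : Set ℕ) ∈ F₀
  · -- degenerate case: finitely many decided sets cover ℕ, so u ∈ 𝒜, contradiction
    exfalso
    rw [hF₀, Filter.mem_generate_iff] at hbot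
    obtain ⟨T, hTsub, hTfin, hTint⟩ := hbot
    set D' : Set (Set ℕ) := {a | a ∈ D ∧ aᶜ ∈ T} with hD'
    have hTD' : T = compl '' D' := by
      apply Set.Subset.antisymm
      · intro s hs
        obtain ⟨a, haD, rfl⟩ := hTsub hs
        exact ⟨a, ⟨haD, hs⟩, rfl⟩
      · rintro s ⟨a, ha, rfl⟩
        exact ha.2
    have hD'fin : D'.Finite := by
      apply Set.Finite.of_finite_image (f := compl)
      · rw [← hTD']; exact hTfin
      · intro a _ b _ hab
        exact compl_injective hab
    have hcover : ∀ x : ℕ, ∃ a ∈ D', x ∈ a := by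
      intro x
      by_contra hx
      push_neg at hx
      have hxT : x ∈ ⋂₀ T := by
        intro s hs
        rw [hTD'] at hs
        obtain ⟨a, ha, rfl⟩ := hs
        exact hx a ha
      exact (hTint hxT).elim
    have hueq : u = ⋃₀ {a | a ∈ D' ∧ a ⊆ u} := by
      apply Set.Subset.antisymm
      · intro x hx
        obtain ⟨a, haD', hxa⟩ := hcover x
        have : a ⊆ u := by
          rcases haD'.1.2 with h | h
          · exact h
          · exfalso
            exact Set.eq_empty_iff_forall_notMem.mp h x ⟨hxa, hx⟩
        exact ⟨a, ⟨haD', this⟩, hxa⟩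
      · intro x hx
        obtain ⟨a, ⟨_, hau⟩, hxa⟩ := hx
        exact hau hxa
    apply hu
    rw [hueq]
    exact sUnion_mem _ (hD'fin.subset fun a ha => ha.1) fun a ha => ha.1.1.1
  · -- main case
    have hne : F₀.NeBot := ⟨fun h => hbot (by rw [h]; exact Filter.mem_bot)⟩
    obtain ⟨r, hr⟩ := Ultrafilter.exists_le F₀
    -- members of 𝒜 ∩ r are "undecided"
    have hundec : ∀ b, b ∈ 𝒜 → b ∈ r → b ∩ u ≠ ∅ ∧ ¬ b ⊆ u := by
      intro b hb𝒜 hbr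
      have hbD : b ∉ D := by
        intro hbD
        have : bᶜ ∈ F₀ := Filter.mem_generate_of_mem ⟨b, hbD, rfl⟩
        have hbc : bᶜ ∈ r := hr this
        rw [Ultrafilter.compl_mem_iff_notMem] at hbc
        exact hbc hbr
      rw [hD] at hbD
      simp only [Set.mem_setOf_eq, not_and, not_or] at hbD
      exact ⟨(hbD hb𝒜).2, (hbD hb𝒜).1⟩
    -- key construction
    have key : ∀ v : Set ℕ, (∀ b, b ∈ 𝒜 → b ∈ r → (b ∩ v).Nonempty) →
        ∃ p : Ultrafilter ℕ, v ∈ p ∧ ∀ a ∈ 𝒜, (a ∈ p ↔ a ∈ r) := by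
      intro v hv
      set G : Filter ℕ := Filter.generate ({s | s ∈ 𝒜 ∧ s ∈ r} ∪ {v}) with hG
      have hGne : G.NeBot := by
        constructor
        intro hGbot
        have : (∅ : Set ℕ) ∈ G := by rw [hGbot]; exact Filter.mem_bot
        rw [hG, Filter.mem_generate_iff] at this
        obtain ⟨T, hTsub, hTfin, hTint⟩ := this
        set T' : Set (Set ℕ) := T \ {v} with hT'
        have hT'sub : ∀ s ∈ T', s ∈ 𝒜 ∧ s ∈ r := by
          intro s hs
          rcases hTsub hs.1 with h | h
          · exact h
          · exact absurd h hs.2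
        have hb : ⋂₀ T' ∈ 𝒜 ∧ ⋂₀ T' ∈ r := by
          constructor
          · exact sInter_mem _ (hTfin.subset Set.diff_subset) fun s hs => (hT'sub s hs).1
          · have : ∀ s ∈ T', s ∈ (r : Filter ℕ) := fun s hs => (hT'sub s hs).2
            exact (Filter.sInter_mem (hTfin.subset Set.diff_subset)).mpr this
        obtain ⟨x, hx⟩ := hv _ hb.1 hb.2
        have hxT : x ∈ ⋂₀ T := by
          intro s hs
          by_cases hsv : s = v
          · rw [hsv]; exact hx.2
          · exact hx.1 s ⟨hs, hsv⟩
        exact (hTint hxT).elim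
      obtain ⟨p, hp⟩ := Ultrafilter.exists_le G
      refine ⟨p, ?_, ?_⟩
      · exact hp (Filter.mem_generate_of_mem (Or.inr rfl))
      · intro a ha
        constructor
        · intro hap
          by_contra har
          have : aᶜ ∈ r := Ultrafilter.compl_mem_iff_notMem.mpr har
          have : aᶜ ∈ p := hp (Filter.mem_generate_of_mem (Or.inl ⟨hcompl _ ha, this⟩))
          rw [Ultrafilter.compl_mem_iff_notMem] at this
          exact this hap
        · intro har
          exact hp (Filter.mem_generate_of_mem (Or.inl ⟨ha, har⟩))
    obtain ⟨p, hpu, hpr⟩ := key u (fun b hb hbr => Set.nonempty_iff_ne_empty.mpr (hundec b hb hbr).1)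
    obtain ⟨q, hqu, hqr⟩ := key uᶜ (fun b hb hbr => by
      have := (hundec b hb hbr).2
      rw [Set.not_subset] at this
      obtain ⟨x, hxb, hxu⟩ := this
      exact ⟨x, hxb, hxu⟩)
    refine ⟨p, q, ?_, fun A hA => (hpr A hA).trans (hqr A hA).symm⟩
    intro hpq
    rw [hpq] at hpu
    rw [Ultrafilter.compl_mem_iff_notMem] at hqu
    exact hqu hpu

lemma uf_sep' {p q : Ultrafilter ℕ} (h : p ≠ q) : ∃ S : Set ℕ, S ∈ p ∧ S ∉ q := by
  by_contra hc
  push_neg at hc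
  exact h (Ultrafilter.eq_of_le (fun S hS => hc S hS)).symm

lemma uf_not_both' {p : Ultrafilter ℕ} {A B : Set ℕ} (hAB : Disjoint A B)
    (hA : A ∈ p) (hB : B ∈ p) : False := by
  have : A ∩ B ∈ p := Filter.inter_mem hA hB
  rw [Set.disjoint_iff_inter_eq_empty.mp hAB] at this
  exact Filter.empty_notMem (p : Filter ℕ) this

structure StA (u : ℕ → Ultrafilter ℕ) where
  C : Set ℕ
  J : Set ℕ
  hJ : J.Infinite
  hC : ∀ j ∈ J, C ∈ u j

lemma stepA (u : ℕ → Ultrafilter ℕ) (hd : ∀ i j, i ≠ j → u i ≠ u j) (s : StA u) :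
    ∃ t : StA u × ℕ × Set ℕ,
      t.2.1 ∈ s.J ∧ t.2.1 ∉ t.1.J ∧ t.1.J ⊆ s.J ∧
      t.2.2 ∈ u t.2.1 ∧ t.2.2 ⊆ s.C ∧ t.1.C ⊆ s.C ∧ Disjoint t.2.2 t.1.C := by
  obtain ⟨j, hj⟩ := s.hJ.nonempty
  obtain ⟨j', hj'⟩ := (s.hJ.diff (Set.finite_singleton j)).nonempty
  have hjj' : j ≠ j' := fun h => hj'.2 (h ▸ rfl)
  obtain ⟨S, hS1, hS2⟩ := uf_sep' (hd j j' hjj')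
  set JS : Set ℕ := {i | i ∈ s.J ∧ s.C ∩ S ∈ u i} with hJS
  set JC : Set ℕ := {i | i ∈ s.J ∧ s.C ∩ Sᶜ ∈ u i} with hJC
  have hCsplit : s.C = (s.C ∩ S) ∪ (s.C ∩ Sᶜ) := by
    ext x; by_cases hx : x ∈ S <;> simp [hx]
  have hsub : s.J ⊆ JS ∪ JC := by
    intro i hi
    have hCi : s.C ∈ u i := s.hC i hi
    rw [hCsplit, Ultrafilter.union_mem_iff] at hCi
    rcases hCi with h | h
    · exact Or.inl ⟨hi, h⟩
    · exact Or.inr ⟨hi, h⟩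
  have hdisjSC : Disjoint (s.C ∩ S) (s.C ∩ Sᶜ) := by
    rw [Set.disjoint_iff_inter_eq_empty]
    ext x; simp only [Set.mem_inter_iff, Set.mem_compl_iff, Set.mem_empty_iff_false, iff_false]
    tauto
  have hnotboth : ∀ i, i ∈ JS → i ∈ JC → False := fun i hiS hiC =>
    uf_not_both' hdisjSC hiS.2 hiC.2
  have hjJS : j ∈ JS := ⟨hj, Filter.inter_mem (s.hC j hj) hS1⟩
  have hj'JC : j' ∈ JC := ⟨hj'.1, Filter.inter_mem (s.hC j' hj'.1)
    (Ultrafilter.compl_mem_iff_notMem.mpr hS2)⟩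
  by_cases hinf : JS.Infinite
  · refine ⟨(⟨s.C ∩ S, JS, hinf, fun i hi => hi.2⟩, j', s.C ∩ Sᶜ),
      hj'.1, fun h => hnotboth j' h hj'JC, fun i hi => hi.1,
      hj'JC.2, Set.inter_subset_left, Set.inter_subset_left, hdisjSC.symm⟩
  · have hJCinf : JC.Infinite := by
      by_contra hJCfin
      rw [Set.not_infinite] at hinf hJCfin
      exact s.hJ (Set.Finite.subset (hinf.union hJCfin) hsub)
    refine ⟨(⟨s.C ∩ Sᶜ, JC, hJCinf, fun i hi => hi.2⟩, j, s.C ∩ S),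
      hj, fun h => hnotboth j hjJS h, fun i hi => hi.1,
      hjJS.2, Set.inter_subset_left, Set.inter_subset_left, hdisjSC⟩

noncomputable def chainA (u : ℕ → Ultrafilter ℕ) (hd : ∀ i j, i ≠ j → u i ≠ u j) :
    ℕ → StA u × ℕ × Set ℕ
  | 0 => (⟨Set.univ, Set.univ, Set.infinite_univ, fun _ _ => Filter.univ_mem⟩, 0, ∅)
  | n + 1 => (stepA u hd (chainA u hd n).1).choose

/-- Lemma A: a countable family of pairwise distinct ultrafilters has an infinite
subfamily with pairwise disjoint representing sets. -/
lemma disjoint_reps (u : ℕ → Ultrafilter ℕ) (hd : ∀ i j, i ≠ j → u i ≠ u j) :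
    ∃ (σ : ℕ → ℕ) (Y : ℕ → Set ℕ), Function.Injective σ ∧
      (∀ k, Y k ∈ u (σ k)) ∧ (∀ k l, k ≠ l → Disjoint (Y k) (Y l)) := by
  set ch := chainA u hd with hch
  have hspec : ∀ n : ℕ,
      (ch (n+1)).2.1 ∈ (ch n).1.J ∧ (ch (n+1)).2.1 ∉ (ch (n+1)).1.J ∧
      (ch (n+1)).1.J ⊆ (ch n).1.J ∧ (ch (n+1)).2.2 ∈ u ((ch (n+1)).2.1) ∧
      (ch (n+1)).2.2 ⊆ (ch n).1.C ∧ (ch (n+1)).1.C ⊆ (ch n).1.C ∧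
      Disjoint ((ch (n+1)).2.2) ((ch (n+1)).1.C) := by
    intro n
    have := (stepA u hd (ch n).1).choose_spec
    exact this
  have hJmono : ∀ n m : ℕ, n ≤ m → (ch m).1.J ⊆ (ch n).1.J := by
    intro n m hnm
    induction m, hnm using Nat.le_induction with
    | base => exact subset_rfl
    | succ m _ ih => exact subset_trans (hspec m).2.2.1 ih
  have hCmono : ∀ n m : ℕ, n ≤ m → (ch m).1.C ⊆ (ch n).1.C := by
    intro n m hnm
    induction m, hnm using Nat.le_induction with
    | base => exact subset_rfl
    | succ m _ ih => exact subset_trans (hspec m).2.2.2.2.2.1 ih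
  refine ⟨fun k => (ch (k+1)).2.1, fun k => (ch (k+1)).2.2, ?_, fun k => (hspec k).2.2.2.1, ?_⟩
  · -- injectivity
    have key : ∀ k l, k < l → (ch (l+1)).2.1 ≠ (ch (k+1)).2.1 := by
      intro k l hkl h
      have h1 : (ch (l+1)).2.1 ∈ (ch l).1.J := (hspec l).1
      have h2 : (ch l).1.J ⊆ (ch (k+1)).1.J := hJmono (k+1) l hkl
      have h3 : (ch (k+1)).2.1 ∉ (ch (k+1)).1.J := (hspec k).2.1
      exact h3 (h ▸ h2 h1)
    intro k l h
    by_contra hkl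
    rcases Nat.lt_or_ge k l with h' | h'
    · exact key k l h' h.symm
    · exact key l k (lt_of_le_of_ne h' (Ne.symm hkl)) h
  · -- disjointness
    have key : ∀ k l, k < l → Disjoint ((ch (k+1)).2.2) ((ch (l+1)).2.2) := by
      intro k l hkl
      have h1 : (ch (l+1)).2.2 ⊆ (ch l).1.C := (hspec l).2.2.2.2.1
      have h2 : (ch l).1.C ⊆ (ch (k+1)).1.C := hCmono (k+1) l hkl
      exact Set.disjoint_of_subset_right (subset_trans h1 h2) (hspec k).2.2.2.2.2.2
    intro k l h
    rcases Nat.lt_or_ge k l with h' | h'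
    · exact key k l h'
    · exact (key l k (lt_of_le_of_ne h' (Ne.symm h))).symm

lemma fpf (g : ℕ → Option ℕ) (hg : ∀ k, g k ≠ some k) :
    ∃ T : Set ℕ, {k | k ∈ T ∧ ∀ j, g k = some j → j ∉ T}.Infinite := by
  by_cases hfib : ∃ a, {i | g i = some a}.Infinite
  · obtain ⟨a, ha⟩ := hfib
    refine ⟨{i | g i = some a} \ {a}, ?_⟩
    apply Set.Infinite.mono (s := {i | g i = some a} \ {a})
    · intro k hk
      refine ⟨hk, fun j hj hjT => ?_⟩
      have : j = a := by
        have := hk.1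
        simp only [Set.mem_setOf_eq] at this
        rw [this] at hj
        exact (Option.some_inj.mp hj).symm
      rw [this] at hjT
      exact hjT.2 rfl
    · exact ha.diff (Set.finite_singleton a)
  · push_neg at hfib
    -- greedy construction
    have hforb : ∀ F : Finset ℕ, (↑F ∪ ((⋃ a ∈ F, {i | g i = some a}) ∪
        (⋃ a ∈ F, {i | g a = some i})) : Set ℕ).Finite := by
      intro F
      refine (F.finite_toSet.union (Set.Finite.union ?_ ?_))
      · exact Set.Finite.biUnion F.finite_toSet fun a _ => hfib a
      · refine Set.Finite.biUnion F.finite_toSet fun a _ => ?_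
        apply Set.Subsingleton.finite
        intro x hx y hy
        simp only [Set.mem_setOf_eq] at hx hy
        rw [hx] at hy
        exact Option.some_inj.mp hy
    have hpick : ∀ F : Finset ℕ, ∃ i : ℕ, i ∉ (↑F ∪ ((⋃ a ∈ F, {i | g i = some a}) ∪
        (⋃ a ∈ F, {i | g a = some i})) : Set ℕ) := by
      intro F
      exact ((hforb F).infinite_compl).nonempty
    choose pick hpickspec using hpick
    set chain : ℕ → Finset ℕ := fun r => Nat.rec ∅ (fun _ acc => insert (pick acc) acc) r
      with hchain
    have hstep : ∀ r, chain (r + 1) = insert (pick (chain r)) (chain r) := fun r => rfl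
    have hmono : ∀ r s : ℕ, r ≤ s → chain r ⊆ chain s := by
      intro r s hrs
      induction s, hrs using Nat.le_induction with
      | base => exact subset_rfl
      | succ s _ ih =>
        rw [hstep s]
        exact subset_trans ih (Finset.subset_insert _ _)
    have hmem : ∀ r, pick (chain r) ∈ chain (r + 1) := by
      intro r; rw [hstep r]; exact Finset.mem_insert_self _ _
    have helts : ∀ k r, k ∈ chain r → ∃ s, s < r ∧ k = pick (chain s) := by
      intro k r
      induction r with
      | zero => intro h; exact absurd h (Finset.notMem_empty k)
      | succ r ih =>
        intro h
        rw [hstep r, Finset.mem_insert] at h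
        rcases h with h | h
        · exact ⟨r, Nat.lt_succ_self r, h⟩
        · obtain ⟨s, hs, hk⟩ := ih h
          exact ⟨s, Nat.lt_succ_of_lt hs, hk⟩
    have hfresh : ∀ r, pick (chain r) ∉ (↑(chain r) ∪ ((⋃ a ∈ chain r, {i | g i = some a}) ∪
        (⋃ a ∈ chain r, {i | g a = some i})) : Set ℕ) := fun r => hpickspec (chain r)
    have hinj : Function.Injective (fun r => pick (chain r)) := by
      have key : ∀ r s, r < s → pick (chain r) ≠ pick (chain s) := by
        intro r s hrs h
        apply hfresh s
        left
        have : pick (chain r) ∈ chain s := hmono (r+1) s hrs (hmem r)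
        rw [h] at this
        exact this
      intro r s h
      by_contra hrs
      rcases Nat.lt_or_ge r s with h' | h'
      · exact key r s h' h
      · exact key s r (lt_of_le_of_ne h' (Ne.symm hrs)) h.symm
    refine ⟨Set.range (fun r => pick (chain r)), ?_⟩
    have hTsub : Set.range (fun r => pick (chain r)) ⊆
        {k | k ∈ Set.range (fun r => pick (chain r)) ∧
          ∀ j, g k = some j → j ∉ Set.range (fun r => pick (chain r))} := by
      rintro k ⟨r, rfl⟩
      refine ⟨⟨r, rfl⟩, fun j hj hjT => ?_⟩
      obtain ⟨s, rfl⟩ := hjT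
      rcases Nat.lt_trichotomy r s with h | h | h
      · -- future: pick (chain s) is a g-value of earlier element
        apply hfresh s
        right; right
        refine Set.mem_biUnion (hmono (r+1) s h (hmem r)) ?_
        exact hj
      · -- equal: g k = some k
        rw [← h] at hj
        exact hg _ hj
      · -- past: j ∈ chain r, so pick (chain r) has g-value in chain r
        apply hfresh r
        right; left
        refine Set.mem_biUnion (hmono (s+1) r h (hmem s)) ?_
        exact hj
    exact Set.Infinite.mono hTsub (Set.infinite_range_of_injective hinj)

/-- Diagonalization against countably many "predictor" ultrafilters. -/
lemma predictor (q : ℕ → Ultrafilter ℕ) (hq : ∀ k, ({k}ᶜ : Set ℕ) ∈ q k) :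
    ∃ β : Set ℕ, {k | ¬ (k ∈ β ↔ β ∈ q k)}.Infinite := by
  rcases fiber_dich q Set.univ Set.infinite_univ with ⟨u0, hK⟩ | ⟨M, _, hMinf, hMinj⟩
  · -- some value u0 occurs infinitely often
    set K : Set ℕ := {n | n ∈ Set.univ ∧ q n = u0} with hKdef
    obtain ⟨K₁, K₂, hK₁, hK₂, hdis, hK₁inf, hK₂inf⟩ := split_inf K hK
    have hone : K₁ ∉ u0 ∨ K₂ ∉ u0 := by
      by_contra h
      push_neg at h
      exact uf_not_both hdis h.1 h.2
    -- wlog pick the one not in u0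
    obtain ⟨K', hK'sub, hK'inf, hK'u0⟩ : ∃ K' : Set ℕ, K' ⊆ K ∧ K'.Infinite ∧ K' ∉ u0 := by
      rcases hone with h | h
      · exact ⟨K₁, hK₁, hK₁inf, h⟩
      · exact ⟨K₂, hK₂, hK₂inf, h⟩
    refine ⟨K'ᶜ, Set.Infinite.mono ?_ hK'inf⟩
    intro k hk
    have hkK : q k = u0 := (hK'sub hk).2
    have h1 : k ∉ K'ᶜ := fun h => h hk
    have h2 : K'ᶜ ∈ q k := by
      rw [hkK, Ultrafilter.compl_mem_iff_notMem]
      exact hK'u0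
    simp only [Set.mem_setOf_eq]
    intro hiff
    exact h1 (hiff.mpr h2)
  · -- q injective on an infinite set M
    set e := hMinf.natEmbedding with he
    have hedist : ∀ i j, i ≠ j → q (e i : ℕ) ≠ q (e j : ℕ) := by
      intro i j hij h
      apply hij
      have : (e i : ℕ) = (e j : ℕ) := hMinj (e i).2 (e j).2 h
      exact e.injective (Subtype.ext this)
    obtain ⟨σ, Y, hσinj, hY, hYdis⟩ := disjoint_reps (fun i => q (e i : ℕ)) hedist
    set κ : ℕ → ℕ := fun i => (e (σ i) : ℕ) with hκ
    have hκinj : Function.Injective κ := by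
      intro i j h
      exact hσinj (e.injective (Subtype.ext h))
    set W : ℕ → Set ℕ := fun i => Y i \ {κ i} with hW
    have hWmem : ∀ i, W i ∈ q (κ i) := by
      intro i
      have h1 : Y i ∈ q (κ i) := hY i
      have h2 : ({κ i}ᶜ : Set ℕ) ∈ q (κ i) := hq (κ i)
      have : Y i ∩ {κ i}ᶜ ∈ q (κ i) := Filter.inter_mem h1 h2
      exact this
    have hWdis : ∀ i j, i ≠ j → Disjoint (W i) (W j) := by
      intro i j hij
      exact Set.disjoint_of_subset Set.diff_subset Set.diff_subset (hYdis i j hij)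
    have hκnW : ∀ i, κ i ∉ W i := fun i h => h.2 rfl
    -- the cell-lookup partial function
    set gg : ℕ → Option ℕ := fun i => if h : ∃ j, κ i ∈ W j then some h.choose else none
      with hgg
    have hggspec : ∀ i j, gg i = some j → κ i ∈ W j := by
      intro i j h
      rw [hgg] at h
      simp only at h
      split at h
      · rename_i hex
        have := hex.choose_spec
        rwa [← Option.some_inj.mp h]
      · exact absurd h (by simp)
    have hggne : ∀ i, gg i ≠ some i := fun i h => hκnW i (hggspec i i h)
    obtain ⟨T, hT⟩ := fpf gg hggne
    refine ⟨⋃ j ∈ T, W j, ?_⟩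
    have himg : κ '' {k | k ∈ T ∧ ∀ j, gg k = some j → j ∉ T} ⊆
        {k | ¬ (k ∈ ⋃ j ∈ T, W j ↔ (⋃ j ∈ T, W j) ∈ q k)} := by
      rintro k ⟨i, hi, rfl⟩
      simp only [Set.mem_setOf_eq]
      intro hiff
      have hmem : (⋃ j ∈ T, W j) ∈ q (κ i) :=
        Filter.mem_of_superset (hWmem i) (Set.subset_biUnion_of_mem hi.1)
      have : κ i ∈ ⋃ j ∈ T, W j := hiff.mpr hmem
      obtain ⟨j, hjT, hjW⟩ := by simpa using this
      -- then gg i = some j' for the unique cell, and j' ∈ T, contradiction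
      have hex : ∃ j', κ i ∈ W j' := ⟨j, hjW⟩
      have hggi : gg i = some hex.choose := by rw [hgg]; simp [hex]
      have hch : κ i ∈ W hex.choose := hex.choose_spec
      have hjeq : hex.choose = j := by
        by_contra hne
        exact Set.disjoint_left.mp (hWdis _ _ hne) hch hjW
      exact hi.2 hex.choose hggi (hjeq ▸ hjT)
    exact Set.Infinite.mono himg ((hT.image (Set.injOn_of_injective hκinj)))

/-- Key lemma: given countably many pairs of distinct ultrafilters, some single set
separates infinitely many of the pairs. -/
lemma pairs_lemma (p q : ℕ → Ultrafilter ℕ) (hpq : ∀ n, p n ≠ q n) :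
    ∃ X : Set ℕ, {n | ¬ (X ∈ p n ↔ X ∈ q n)}.Infinite := by
  rcases fiber_dich (fun n => (p n, q n)) Set.univ Set.infinite_univ with
    ⟨⟨P, Q⟩, hfib⟩ | ⟨N, _, hNinf, hNinj⟩
  · -- Case I: a single pair (P, Q) repeats infinitely often
    obtain ⟨n₀, hn₀⟩ := hfib.nonempty
    have hPQ : P ≠ Q := by
      have h1 : p n₀ = P := congrArg Prod.fst hn₀.2
      have h2 : q n₀ = Q := congrArg Prod.snd hn₀.2
      rw [← h1, ← h2]; exact hpq n₀
    obtain ⟨A, hAP, hAQ⟩ := uf_sep hPQ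
    refine ⟨A, Set.Infinite.mono ?_ hfib⟩
    intro n hn
    have h1 : p n = P := congrArg Prod.fst hn.2
    have h2 : q n = Q := congrArg Prod.snd hn.2
    simp only [Set.mem_setOf_eq]
    rw [h1, h2]
    intro hiff
    exact hAQ (hiff.mp hAP)
  · -- Case II: the pairs are injective on an infinite set N
    by_cases hocc : ∃ r : Ultrafilter ℕ, {n | n ∈ N ∧ (p n = r ∨ q n = r)}.Infinite
    · -- Case IIa: some single ultrafilter r occurs infinitely often
      obtain ⟨r, hr⟩ := hocc
      set M₀ : Set ℕ := {n | n ∈ N ∧ (p n = r ∨ q n = r)} with hM₀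
      set p' : ℕ → Ultrafilter ℕ := fun n => if q n = r then p n else q n with hp'
      have hM₀p' : ∀ n ∈ M₀, p' n ≠ r ∧
          ((p n = p' n ∧ q n = r) ∨ (p n = r ∧ q n = p' n)) := by
        intro n hn
        by_cases h : q n = r
        · have : p' n = p n := by rw [hp']; simp [h]
          rw [this]
          exact ⟨fun hc => hpq n (hc.trans h.symm), Or.inl ⟨rfl, h⟩⟩
        · have hpn : p n = r := (hn.2).resolve_right h
          have : p' n = q n := by rw [hp']; simp [h]
          rw [this]
          exact ⟨fun hc => hpq n (hpn.trans hc.symm), Or.inr ⟨hpn, rfl⟩⟩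
      -- fibers of p' on M₀ are finite
      have hfibp' : ∀ x : Ultrafilter ℕ, {n | n ∈ M₀ ∧ p' n = x}.Finite := by
        intro x
        have hsub : {n | n ∈ M₀ ∧ p' n = x} ⊆
            {n | n ∈ N ∧ (p n, q n) = (x, r)} ∪ {n | n ∈ N ∧ (p n, q n) = (r, x)} := by
          intro n hn
          rcases (hM₀p' n hn.1).2 with ⟨h1, h2⟩ | ⟨h1, h2⟩
          · left; exact ⟨hn.1.1, by rw [h1, h2, hn.2]⟩
          · right; exact ⟨hn.1.1, by rw [h1, h2, hn.2]⟩
        apply Set.Finite.subset _ hsub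
        apply Set.Finite.union
        · apply Set.Subsingleton.finite
          intro a ha b hb
          exact hNinj ha.1 hb.1 (ha.2.trans hb.2.symm)
        · apply Set.Subsingleton.finite
          intro a ha b hb
          exact hNinj ha.1 hb.1 (ha.2.trans hb.2.symm)
      rcases fiber_dich p' M₀ hr with ⟨x, hx⟩ | ⟨M, hMsub, hMinf, hMinj'⟩
      · exact absurd hx (Set.not_infinite.mpr (hfibp' x))
      · set e := hMinf.natEmbedding with he
        have hedist : ∀ i j, i ≠ j → p' (e i : ℕ) ≠ p' (e j : ℕ) := by
          intro i j hij h
          exact hij (e.injective (Subtype.ext (hMinj' (e i).2 (e j).2 h)))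
        obtain ⟨σ, Y, hσinj, hY, hYdis⟩ := disjoint_reps (fun i => p' (e i : ℕ)) hedist
        set m : ℕ → ℕ := fun k => (e (σ k) : ℕ) with hm
        have hminj : Function.Injective m := fun i j h =>
          hσinj (e.injective (Subtype.ext h))
        have hmM : ∀ k, m k ∈ M₀ := fun k => hMsub (e (σ k)).2
        -- choose a parity class whose union avoids r
        have huniondis : Disjoint (⋃ k, Y (2 * k)) (⋃ k, Y (2 * k + 1)) := by
          rw [Set.disjoint_left]
          rintro x hx1 hx2
          simp only [Set.mem_iUnion] at hx1 hx2
          obtain ⟨k, hk⟩ := hx1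
          obtain ⟨l, hl⟩ := hx2
          exact Set.disjoint_left.mp (hYdis (2 * k) (2 * l + 1) (by omega)) hk hl
        have hhalf : ∃ c : ℕ → ℕ, Function.Injective c ∧ (⋃ k, Y (c k)) ∉ r := by
          by_cases h1 : (⋃ k, Y (2 * k)) ∈ r
          · refine ⟨fun k => 2 * k + 1, fun a b hab => ?_, fun h2 => ?_⟩
            · simp only at hab; omega
            · exact uf_not_both huniondis h1 h2
          · refine ⟨fun k => 2 * k, fun a b hab => ?_, h1⟩
            simp only at hab; omega
        obtain ⟨c, hcinj, hcr⟩ := hhalf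
        refine ⟨⋃ k, Y (c k), ?_⟩
        have himg : (fun k => m (c k)) '' Set.univ ⊆
            {n | ¬ ((⋃ k, Y (c k)) ∈ p n ↔ (⋃ k, Y (c k)) ∈ q n)} := by
          rintro n ⟨k, _, rfl⟩
          have hXp' : (⋃ k, Y (c k)) ∈ p' (m (c k)) :=
            Filter.mem_of_superset (hY (c k)) (Set.subset_iUnion (fun k => Y (c k)) k)
          have hXr : (⋃ k, Y (c k)) ∉ r := hcr
          simp only [Set.mem_setOf_eq]
          rcases (hM₀p' (m (c k)) (hmM (c k))).2 with ⟨h1, h2⟩ | ⟨h1, h2⟩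
          · rw [h1, h2]; intro hiff; exact hXr (hiff.mp hXp')
          · rw [h1, h2]; intro hiff; exact hXr (hiff.mpr hXp')
        refine Set.Infinite.mono himg ?_
        apply Set.Infinite.image
        · exact Set.injOn_of_injective (fun a b hab => hcinj (hminj hab))
        · exact Set.infinite_univ
    · -- Case IIb: every ultrafilter occurs finitely often; extract distinct p-values
      push_neg at hocc
      have hpfib : ∀ r : Ultrafilter ℕ, {n | n ∈ N ∧ p n = r}.Finite := by
        intro r
        exact Set.Finite.subset (hocc r) (fun n hn => ⟨hn.1, Or.inl hn.2⟩)
      rcases fiber_dich p N hNinf with ⟨x, hx⟩ | ⟨M, hMsub, hMinf, hMinj'⟩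
      · exact absurd hx (Set.not_infinite.mpr (hpfib x))
      · set e := hMinf.natEmbedding with he
        have hedist : ∀ i j, i ≠ j → p (e i : ℕ) ≠ p (e j : ℕ) := by
          intro i j hij h
          exact hij (e.injective (Subtype.ext (hMinj' (e i).2 (e j).2 h)))
        obtain ⟨σ, Y, hσinj, hY, hYdis⟩ := disjoint_reps (fun i => p (e i : ℕ)) hedist
        set m : ℕ → ℕ := fun k => (e (σ k) : ℕ) with hm
        have hminj : Function.Injective m := fun i j h =>
          hσinj (e.injective (Subtype.ext h))
        -- shrink to sets separating p from q
        have hS : ∀ k, ∃ S : Set ℕ, S ∈ p (m k) ∧ S ∉ q (m k) := fun k => uf_sep (hpq (m k))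
        choose S hSp hSq using hS
        -- shifted cells
        set Z : ℕ → Set ℕ := fun i => if i = 0 then ∅ else Y (i - 1) ∩ S (i - 1) with hZ
        set mp : ℕ → ℕ := fun i => m (i - 1) with hmp
        have hZp : ∀ i, 1 ≤ i → Z i ∈ p (mp i) := by
          intro i hi
          rw [hZ, hmp]
          simp only [Nat.ne_zero_of_lt hi, if_neg (by omega : ¬ i = 0)]
          exact Filter.inter_mem (hY (i - 1)) (hSp (i - 1))
        have hZq : ∀ i, 1 ≤ i → Z i ∉ q (mp i) := by
          intro i hi hmem
          rw [hZ] at hmem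
          simp only [if_neg (by omega : ¬ i = 0)] at hmem
          exact hSq (i - 1) (Filter.mem_of_superset hmem Set.inter_subset_right)
        have hZdis : ∀ i j, i ≠ j → Disjoint (Z i) (Z j) := by
          intro i j hij
          rw [hZ]
          by_cases hi : i = 0
          · simp [hi]
          by_cases hj : j = 0
          · simp [hj]
          simp only [if_neg hi, if_neg hj]
          refine Set.disjoint_of_subset Set.inter_subset_left Set.inter_subset_left ?_
          exact hYdis (i - 1) (j - 1) (by omega)
        set U : Set ℕ := ⋃ i, Z i with hU
        by_cases hUq : {i | 1 ≤ i ∧ U ∉ q (mp i)}.Infinite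
        · -- easy subcase: U itself works
          refine ⟨U, ?_⟩
          have himg : mp '' {i | 1 ≤ i ∧ U ∉ q (mp i)} ⊆
              {n | ¬ (U ∈ p n ↔ U ∈ q n)} := by
            rintro n ⟨i, hi, rfl⟩
            have hUp : U ∈ p (mp i) :=
              Filter.mem_of_superset (hZp i hi.1) (Set.subset_iUnion Z i)
            simp only [Set.mem_setOf_eq]
            intro hiff
            exact hi.2 (hiff.mp hUp)
          refine Set.Infinite.mono himg (Set.Infinite.image ?_ hUq)
          intro a ha b hb hab
          have h1 : 1 ≤ a := ha.1
          have h2 : 1 ≤ b := hb.1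
          have : a - 1 = b - 1 := hminj hab
          omega
        · -- main subcase: predictor machinery
          have hK₀ : {i | 1 ≤ i ∧ U ∈ q (mp i)}ᶜ ⊆ {0} ∪ {i | 1 ≤ i ∧ U ∉ q (mp i)} := by
            intro i hi
            simp only [Set.mem_compl_iff, Set.mem_setOf_eq, not_and] at hi
            by_cases h0 : i = 0
            · left; exact h0
            · right; exact ⟨by omega, hi (by omega)⟩
          set c : ℕ → ℕ := fun x => if h : ∃ i, x ∈ Z i then h.choose else 0 with hc
          have hcx : ∀ x, c x = if h : ∃ i, x ∈ Z i then h.choose else 0 := fun x => by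
            rw [hc]
          have hcZ : ∀ x i, x ∈ Z i → c x = i := by
            intro x i hx
            have hex : ∃ i, x ∈ Z i := ⟨i, hx⟩
            rw [hcx x, dif_pos hex]
            by_contra hne
            exact Set.disjoint_left.mp (hZdis _ _ hne) hex.choose_spec hx
          have hc0 : c ⁻¹' {0} = Uᶜ := by
            ext x
            simp only [Set.mem_preimage, Set.mem_singleton_iff, Set.mem_compl_iff, hU,
              Set.mem_iUnion]
            constructor
            · intro h hex
              obtain ⟨i, hi⟩ := hex
              have : c x = i := hcZ x i hi
              rw [h] at this
              rw [← this] at hi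
              rw [hZ] at hi
              simp at hi
            · intro h
              rw [hcx x, dif_neg (fun hex => h hex)]
          have hcpre : ∀ i, 1 ≤ i → c ⁻¹' {i} = Z i := by
            intro i hi
            ext x
            simp only [Set.mem_preimage, Set.mem_singleton_iff]
            constructor
            · intro h
              rw [hcx x] at h
              by_cases hex : ∃ j, x ∈ Z j
              · rw [dif_pos hex] at h
                rw [← h]; exact hex.choose_spec
              · rw [dif_neg hex] at h
                omega
            · exact hcZ x i
          set qhat : ℕ → Ultrafilter ℕ := fun i =>
            if 1 ≤ i ∧ U ∈ q (mp i) then Ultrafilter.map c (q (mp i)) else pure (i + 1)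
            with hqhat
          have hqhatx : ∀ i, qhat i = if 1 ≤ i ∧ U ∈ q (mp i) then
              Ultrafilter.map c (q (mp i)) else pure (i + 1) := fun i => by rw [hqhat]
          have hqhat_not : ∀ i, ({i}ᶜ : Set ℕ) ∈ qhat i := by
            intro i
            rw [hqhatx i]
            split
            · rename_i hcond
              rw [Ultrafilter.mem_map]
              have : c ⁻¹' ({i}ᶜ : Set ℕ) = (c ⁻¹' {i})ᶜ := rfl
              rw [this, hcpre i hcond.1, Ultrafilter.compl_mem_iff_notMem]
              exact hZq i hcond.1
            · rw [Ultrafilter.mem_pure]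
              simp
          obtain ⟨β, hβ⟩ := predictor qhat hqhat_not
          set X : Set ℕ := c ⁻¹' (β \ {0}) with hX
          -- membership transfer facts
          have hXq : ∀ i, 1 ≤ i → U ∈ q (mp i) → (X ∈ q (mp i) ↔ β ∈ qhat i) := by
            intro i hi hU'
            rw [hqhatx i, if_pos ⟨hi, hU'⟩, Ultrafilter.mem_map]
            have hsplit : c ⁻¹' β = X ∪ (if (0:ℕ) ∈ β then Uᶜ else ∅) := by
              rw [hX]
              by_cases h0 : (0:ℕ) ∈ β
              · simp only [if_pos h0, ← hc0]
                ext x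
                simp only [Set.mem_preimage, Set.mem_union, Set.mem_diff,
                  Set.mem_singleton_iff]
                constructor
                · intro h
                  by_cases hx0 : c x = 0
                  · right; exact hx0
                  · left; exact ⟨h, hx0⟩
                · rintro (⟨h, _⟩ | h)
                  · exact h
                  · rw [h]; exact h0
              · simp only [if_neg h0, Set.union_empty]
                ext x
                simp only [Set.mem_preimage, Set.mem_diff, Set.mem_singleton_iff]
                constructor
                · intro h
                  refine ⟨h, fun hx0 => ?_⟩
                  rw [hx0] at h
                  exact h0 h
                · exact fun h => h.1
            constructor
            · intro hXmem
              rw [hsplit]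
              exact Filter.mem_of_superset hXmem Set.subset_union_left
            · intro hβmem
              rw [hsplit] at hβmem
              by_cases h0 : (0:ℕ) ∈ β
              · rw [if_pos h0, Ultrafilter.union_mem_iff] at hβmem
                rcases hβmem with h | h
                · exact h
                · exfalso
                  rw [Ultrafilter.compl_mem_iff_notMem] at h
                  exact h hU'
              · rwa [if_neg h0, Set.union_empty] at hβmem
          have hXp : ∀ i, 1 ≤ i → (X ∈ p (mp i) ↔ i ∈ β) := by
            intro i hi
            constructor
            · intro hXmem
              by_contra hiβ
              have hdisj : Disjoint X (Z i) := by
                rw [Set.disjoint_left]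
                intro x hxX hxZ
                have : c x = i := hcZ x i hxZ
                rw [hX] at hxX
                simp only [Set.mem_preimage, Set.mem_diff, Set.mem_singleton_iff] at hxX
                rw [this] at hxX
                exact hiβ hxX.1
              exact uf_not_both hdisj hXmem (hZp i hi)
            · intro hiβ
              refine Filter.mem_of_superset (hZp i hi) ?_
              intro x hxZ
              rw [hX]
              simp only [Set.mem_preimage, Set.mem_diff, Set.mem_singleton_iff]
              rw [hcZ x i hxZ]
              exact ⟨hiβ, by omega⟩
          refine ⟨X, ?_⟩
          have hBadFin : {i | 1 ≤ i ∧ U ∉ q (mp i)}.Finite := Set.not_infinite.mp hUq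
          have hV' : ({i | ¬ (i ∈ β ↔ β ∈ qhat i)} ∩ {i | 1 ≤ i ∧ U ∈ q (mp i)}).Infinite := by
            by_contra hfin
            rw [Set.not_infinite] at hfin
            apply hβ
            apply Set.Finite.subset (hfin.union ((Set.finite_singleton 0).union hBadFin))
            intro i hi
            by_cases h : i ∈ {i | 1 ≤ i ∧ U ∈ q (mp i)}
            · left; exact ⟨hi, h⟩
            · right; exact hK₀ h
          have himg : mp '' ({i | ¬ (i ∈ β ↔ β ∈ qhat i)} ∩ {i | 1 ≤ i ∧ U ∈ q (mp i)}) ⊆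
              {n | ¬ (X ∈ p n ↔ X ∈ q n)} := by
            rintro n ⟨i, ⟨hiV, hiK⟩, rfl⟩
            simp only [Set.mem_setOf_eq]
            intro hiff
            apply hiV
            exact ((hXp i hiK.1).symm.trans (hiff.trans (hXq i hiK.1 hiK.2)))
          refine Set.Infinite.mono himg (Set.Infinite.image ?_ hV')
          intro a ha b hb hab
          have h1 : 1 ≤ a := ha.2.1
          have h2 : 1 ≤ b := hb.2.1
          have : a - 1 = b - 1 := hminj hab
          omega

/-- P(ℕ) is not the union of a countable increasing chain of proper subalgebras. -/
theorem ba_chain (𝒜 : ℕ → Set (Set ℕ))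
    (hmono : ∀ s t : ℕ, s ≤ t → 𝒜 s ⊆ 𝒜 t)
    (huniv : ∀ t, Set.univ ∈ 𝒜 t)
    (hcompl : ∀ t, ∀ A ∈ 𝒜 t, Aᶜ ∈ 𝒜 t)
    (hinter : ∀ t, ∀ A ∈ 𝒜 t, ∀ B ∈ 𝒜 t, A ∩ B ∈ 𝒜 t)
    (hcover : ∀ A : Set ℕ, ∃ t, A ∈ 𝒜 t) :
    ∃ t, ∀ A : Set ℕ, A ∈ 𝒜 t := by
  by_contra hprop
  push_neg at hprop
  have hpair : ∀ t, ∃ pq : Ultrafilter ℕ × Ultrafilter ℕ, pq.1 ≠ pq.2 ∧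
      ∀ A ∈ 𝒜 t, (A ∈ pq.1 ↔ A ∈ pq.2) := by
    intro t
    obtain ⟨u, hu⟩ := hprop t
    obtain ⟨p, q, h1, h2⟩ := exists_unseparated (𝒜 t) (huniv t) (hcompl t) (hinter t) hu
    exact ⟨(p, q), h1, h2⟩
  choose pq hpq1 hpq2 using hpair
  obtain ⟨X, hX⟩ := pairs_lemma (fun t => (pq t).1) (fun t => (pq t).2) hpq1
  obtain ⟨T, hT⟩ := hcover X
  obtain ⟨n, hn1, hn2⟩ : ∃ n, n ∈ {n | ¬ (X ∈ (pq n).1 ↔ X ∈ (pq n).2)} ∧ T < n := by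
    obtain ⟨n, hn⟩ := (hX.diff (Set.finite_Iic T)).nonempty
    exact ⟨n, hn.1, by simpa using hn.2⟩
  exact hn1 (hpq2 n X (hmono T n (le_of_lt hn2) hT))

-- helpers for the group reduction
lemma pi_list_prod_apply {ι : Type*} {G : ι → Type*} [∀ i, Group (G i)]
    (l : List (∀ i, G i)) (n : ι) : l.prod n = (l.map fun f => f n).prod := by
  induction l with
  | nil => rfl
  | cons f l ih => simp only [List.prod_cons, List.map_cons, Pi.mul_apply, ih]

lemma list_comm_pairs {G : Type*} [Group G] (l : List G)
    (h : ∀ y ∈ l, ∃ a b : G, y = ⁅a, b⁆) :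
    ∃ lp : List (G × G), (lp.map fun p => ⁅p.1, p.2⁆).prod = l.prod := by
  induction l with
  | nil => exact ⟨[], rfl⟩
  | cons y l ih =>
    obtain ⟨a, b, hab⟩ := h y (List.mem_cons_self)
    obtain ⟨lp, hlp⟩ := ih (fun z hz => h z (List.mem_cons_of_mem _ hz))
    refine ⟨(a, b) :: lp, ?_⟩
    simp only [List.map_cons, List.prod_cons, hlp, hab]

lemma width {G : Type*} [Group G] (hperf : commutator G = ⊤) (v : G) :
    ∃ lp : List (G × G), (lp.map fun p => ⁅p.1, p.2⁆).prod = v := by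
  have hv : v ∈ commutator G := by rw [hperf]; trivial
  rw [commutator_eq_closure] at hv
  have hv' : v ∈ Submonoid.closure (commutatorSet G ∪ (commutatorSet G)⁻¹) := by
    have := Subgroup.closure_toSubmonoid (commutatorSet G)
    have h2 : v ∈ (Subgroup.closure (commutatorSet G)).toSubmonoid := hv
    rw [this] at h2
    exact h2
  obtain ⟨l, hl1, hl2⟩ := Submonoid.exists_list_of_mem_closure hv'
  have hcomm : ∀ y ∈ l, ∃ a b : G, y = ⁅a, b⁆ := by
    intro y hy
    rcases hl1 y hy with h | h
    · obtain ⟨a, b, hab⟩ := h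
      exact ⟨a, b, hab.symm⟩
    · obtain ⟨a, b, hab⟩ := Set.mem_inv.mp h
      exact ⟨b, a, by rw [← commutatorElement_inv, hab, inv_inv]⟩
  obtain ⟨lp, hlp⟩ := list_comm_pairs l hcomm
  exact ⟨lp, hlp.trans hl2⟩

lemma list_prod_single {α : Type*} {G : Type*} [Group G] (l : List α) (hl : l.Nodup)
    (f : α → G) (a : α) (ha : a ∈ l) (hothers : ∀ b ∈ l, b ≠ a → f b = 1) :
    (l.map f).prod = f a := by
  induction l with
  | nil => cases ha
  | cons x l ih =>
    rcases List.mem_cons.mp ha with rfl | ha'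
    · have hone : ∀ g ∈ l.map f, g = 1 := by
        intro g hg
        obtain ⟨b, hb, rfl⟩ := List.mem_map.mp hg
        exact hothers b (List.mem_cons_of_mem _ hb)
          (fun h => (List.nodup_cons.mp hl).1 (h ▸ hb))
      simp only [List.map_cons, List.prod_cons, List.prod_eq_one hone, mul_one]
    · have hx1 : f x = 1 := hothers x (List.mem_cons_self)
        (fun h => (List.nodup_cons.mp hl).1 (h ▸ ha'))
      simp only [List.map_cons, List.prod_cons, hx1, one_mul]
      exact ih (List.nodup_cons.mp hl).2 ha'
        (fun b hb hba => hothers b (List.mem_cons_of_mem _ hb) hba)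

/-- Let `Sₙ` be nontrivial finite perfect groups falling into finitely many isomorphism
classes (every `Sₙ` is isomorphic to some `Sₘ` with `m` in a fixed finite set). Then
`∏ n, Sₙ` cannot be written as the union of a countable increasing chain of proper
subgroups. -/
theorem stmt_6 (S : ℕ → Type*) [∀ n, Group (S n)] [∀ n, Finite (S n)]
    [∀ n, Nontrivial (S n)] (hperf : ∀ n, commutator (S n) = ⊤)
    (hfin : ∃ J : Finset ℕ, ∀ n, ∃ m ∈ J, Nonempty (S n ≃* S m)) :
    ¬ ∃ H : ℕ → Subgroup (∀ n, S n),
        Monotone H ∧ (∀ t, H t ≠ ⊤) ∧ ∀ g : ∀ n, S n, ∃ t, g ∈ H t := by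
  classical
  rintro ⟨H, hHmono, hHproper, hHcover⟩
  obtain ⟨J, hJ⟩ := hfin
  choose cl hclJ iso using hJ
  have hψex : ∀ m n : ℕ, ∃ f : S m →* S n, (cl n = m → Function.Bijective f) := by
    intro m n
    by_cases h : cl n = m
    · subst h
      exact ⟨((iso n).some.symm : S (cl n) ≃* S n).toMonoidHom,
        fun _ => (iso n).some.symm.bijective⟩
    · exact ⟨1, fun hc => absurd hc h⟩
  choose ψ hψbij using hψex
  set χ : ∀ m : ℕ, S m → Set ℕ → (∀ n, S n) :=
    fun m v A n => if cl n = m ∧ n ∈ A then ψ m n v else 1 with hχdef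
  have hχ : ∀ m v A n, χ m v A n = if cl n = m ∧ n ∈ A then ψ m n v else 1 :=
    fun m v A n => by rw [hχdef]
  -- complement identity
  have hcompl_id : ∀ (m : ℕ) (v : S m) (A : Set ℕ),
      χ m v Aᶜ = χ m v Set.univ * (χ m v A)⁻¹ := by
    intro m v A
    funext n
    rw [Pi.mul_apply, Pi.inv_apply, hχ, hχ, hχ]
    by_cases h1 : cl n = m
    · by_cases h2 : n ∈ A
      · rw [if_neg (by simp [h2]), if_pos ⟨h1, Set.mem_univ n⟩, if_pos ⟨h1, h2⟩]
        rw [mul_inv_cancel]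
      · rw [if_pos ⟨h1, by simpa using h2⟩, if_pos ⟨h1, Set.mem_univ n⟩, if_neg (by simp [h2])]
        rw [inv_one, mul_one]
    · rw [if_neg (fun h => h1 h.1), if_neg (fun h : cl n = m ∧ n ∈ Set.univ => h1 h.1),
        if_neg (fun h : cl n = m ∧ n ∈ A => h1 h.1)]
      rw [inv_one, mul_one]
  -- intersection identity
  have hinter_id : ∀ (m : ℕ) (A B : Set ℕ) (lp : List (S m × S m)) (v : S m),
      (lp.map fun p => ⁅p.1, p.2⁆).prod = v →
      χ m v (A ∩ B) = (lp.map fun p => ⁅χ m p.1 A, χ m p.2 B⁆).prod := by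
    intro m A B lp v hv
    funext n
    rw [pi_list_prod_apply, List.map_map, hχ]
    by_cases h1 : cl n = m
    · by_cases h2 : n ∈ A
      · by_cases h3 : n ∈ B
        · rw [if_pos ⟨h1, ⟨h2, h3⟩⟩]
          have hmapeq : ((fun f : ∀ k, S k => f n) ∘
              (fun p : S m × S m => ⁅χ m p.1 A, χ m p.2 B⁆))
              = (ψ m n) ∘ (fun p : S m × S m => ⁅p.1, p.2⁆) := by
            funext p
            show ⁅χ m p.1 A n, χ m p.2 B n⁆ = ψ m n ⁅p.1, p.2⁆
            rw [hχ, hχ, if_pos ⟨h1, h2⟩, if_pos ⟨h1, h3⟩, map_commutatorElement]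
          rw [hmapeq, ← List.map_map, ← map_list_prod (ψ m n), hv]
        · rw [if_neg (fun h => h3 h.2.2)]
          symm
          apply List.prod_eq_one
          intro g hg
          obtain ⟨p, _, rfl⟩ := List.mem_map.mp hg
          show ⁅χ m p.1 A n, χ m p.2 B n⁆ = 1
          rw [hχ m p.2 B n, if_neg (fun h => h3 h.2), commutatorElement_one_right]
      · rw [if_neg (fun h => h2 h.2.1)]
        symm
        apply List.prod_eq_one
        intro g hg
        obtain ⟨p, _, rfl⟩ := List.mem_map.mp hg
        show ⁅χ m p.1 A n, χ m p.2 B n⁆ = 1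
        rw [hχ m p.1 A n, if_neg (fun h => h2 h.2), commutatorElement_one_left]
    · rw [if_neg (fun h => h1 h.1)]
      symm
      apply List.prod_eq_one
      intro g hg
      obtain ⟨p, _, rfl⟩ := List.mem_map.mp hg
      show ⁅χ m p.1 A n, χ m p.2 B n⁆ = 1
      rw [hχ m p.1 A n, if_neg (fun h => h1 h.1), commutatorElement_one_left]
  -- decomposition: if all indicators lie in H t then everything does
  have hdecomp : ∀ (g : ∀ n, S n) (t : ℕ),
      (∀ m ∈ J, ∀ (A : Set ℕ) (v : S m), χ m v A ∈ H t) → g ∈ H t := by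
    intro g t hall
    letI : ∀ m : ℕ, Fintype (S m) := fun m => Fintype.ofFinite (S m)
    set P : ℕ → (∀ n, S n) := fun m =>
      ((Finset.univ : Finset (S m)).toList.map
        (fun v => χ m v {n | ψ m n v = g n})).prod with hP
    have hPM : ∀ m ∈ J, P m ∈ H t := by
      intro m hm
      simp only [hP]
      apply Subgroup.list_prod_mem
      intro x hx
      obtain ⟨v, _, rfl⟩ := List.mem_map.mp hx
      exact hall m hm _ v
    have hPval : ∀ m n, cl n = m → P m n = g n := by
      intro m n hcl
      have hbij := hψbij m n hcl
      obtain ⟨v₀, hv₀⟩ := hbij.surjective (g n)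
      simp only [hP]
      rw [pi_list_prod_apply, List.map_map]
      have := list_prod_single (Finset.univ : Finset (S m)).toList
        (Finset.nodup_toList _)
        (fun v => χ m v {k | ψ m k v = g k} n) v₀
        (Finset.mem_toList.mpr (Finset.mem_univ v₀))
        (fun v _ hvne => by
          show χ m v {k | ψ m k v = g k} n = 1
          rw [hχ, if_neg ?_]
          rintro ⟨_, hmem⟩
          exact hvne (hbij.injective (hmem.trans hv₀.symm)))
      have h2 : χ m v₀ {k | ψ m k v₀ = g k} n = g n := by
        rw [hχ, if_pos ⟨hcl, hv₀⟩]
        exact hv₀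
      exact this.trans h2
    have hPone : ∀ m n, cl n ≠ m → P m n = 1 := by
      intro m n hcl
      simp only [hP]
      rw [pi_list_prod_apply, List.map_map]
      apply List.prod_eq_one
      intro x hx
      obtain ⟨v, _, rfl⟩ := List.mem_map.mp hx
      show χ m v {k | ψ m k v = g k} n = 1
      rw [hχ, if_neg (fun h => hcl h.1)]
    have houter : (J.toList.map P).prod = g := by
      funext n
      rw [pi_list_prod_apply, List.map_map]
      have := list_prod_single J.toList (Finset.nodup_toList J)
        (fun m => P m n) (cl n)
        (Finset.mem_toList.mpr (hclJ n))
        (fun m _ hmne => hPone m n (fun h => hmne h.symm))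
      exact this.trans (hPval (cl n) n rfl)
    rw [← houter]
    apply Subgroup.list_prod_mem
    intro x hx
    obtain ⟨m, hm, rfl⟩ := List.mem_map.mp hx
    exact hPM m (Finset.mem_toList.mp hm)
  -- constants are captured at a single level
  have hconstm : ∀ m : ℕ, ∃ t, ∀ v : S m, χ m v Set.univ ∈ H t := by
    intro m
    letI : Fintype (S m) := Fintype.ofFinite (S m)
    choose tv htv using fun v : S m => hHcover (χ m v Set.univ)
    exact ⟨Finset.univ.sup tv, fun v =>
      hHmono (Finset.le_sup (Finset.mem_univ v)) (htv v)⟩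
  -- per-class full capture via the boolean chain theorem
  have hclass : ∀ m : ℕ, ∃ t, ∀ (A : Set ℕ) (v : S m), χ m v A ∈ H t := by
    intro m
    obtain ⟨t₀, ht₀⟩ := hconstm m
    obtain ⟨t, ht⟩ := ba_chain (fun t => {A | ∀ v : S m, χ m v A ∈ H (t₀ + t)})
      (fun s t hst A hA v => hHmono (by omega) (hA v))
      (fun t v => hHmono (by omega) (ht₀ v))
      (fun t A hA v => by
        rw [hcompl_id]
        exact mul_mem (hHmono (by omega) (ht₀ v)) (inv_mem (hA v)))
      (fun t A hA B hB v => by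
        obtain ⟨lp, hlp⟩ := width (hperf m) v
        rw [hinter_id m A B lp v hlp]
        apply Subgroup.list_prod_mem
        intro x hx
        obtain ⟨p, _, rfl⟩ := List.mem_map.mp hx
        rw [commutatorElement_def]
        exact mul_mem (mul_mem (mul_mem (hA p.1) (hB p.2)) (inv_mem (hA p.1)))
          (inv_mem (hB p.2)))
      (fun A => by
        letI : Fintype (S m) := Fintype.ofFinite (S m)
        choose tv htv using fun v : S m => hHcover (χ m v A)
        refine ⟨Finset.univ.sup tv, fun v => hHmono ?_ (htv v)⟩
        have := Finset.le_sup (f := tv) (Finset.mem_univ v)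
        omega)
    exact ⟨t₀ + t, fun A v => ht A v⟩
  choose tm htm using hclass
  have hall : ∀ g : ∀ n, S n, g ∈ H (J.sup tm) := by
    intro g
    apply hdecomp g (J.sup tm)
    intro m hm A v
    exact hHmono (Finset.le_sup hm) (htm m A v)
  exact hHproper (J.sup tm) ((Subgroup.eq_top_iff' (H (J.sup tm))).mpr hall)
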